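/- Let $f$ be a completely monotone function on $(0,\infty)$ with $f(0^+)=1$, represented as $f(t)=\int_0^\infty e^{-st}\,\tau(ds)$ for a probability measure $\tau$ on $[0,\infty)$. Then for any $\xi,\eta\in\mathbb{R}^n$ there exists $C=C(f,\xi,\eta)>0$ such that $f(|x-\xi|) \le C f(|x-\eta|)$ for all $x\in\mathbb{R}^n$. Moreover one may take $C = 2e^{a|\xi-\eta|}$ where $a>0$ is chosen so that $\tau([0,a]) > 1/2$. -/

import Mathlib

open Set MeasureTheory

/-- For a completely monotone function `f(t) = ∫_0^∞ e^{-st} τ(ds)` with `τ` a probability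
measure on `[0,∞)`, and any `ξ, η ∈ ℝⁿ`: if `a > 0` satisfies `τ([0,a]) > 1/2`, then
`f(|x-ξ|) ≤ 2 e^{a|ξ-η|} f(|x-η|)` for all `x ∈ ℝⁿ`. -/
theorem cm_shift_comparison (n : ℕ) (τ : Measure ℝ) [IsProbabilityMeasure τ]
    (hτsupp : τ (Set.Iio 0) = 0)
    (f : ℝ → ℝ) (hf : ∀ t : ℝ, 0 ≤ t → f t = ∫ s, Real.exp (-(s * t)) ∂τ)
    (ξ η : EuclideanSpace ℝ (Fin n)) (a : ℝ) (ha : 0 < a)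
    (haτ : 1 / 2 < (τ (Set.Icc 0 a)).toReal) :
    ∀ x : EuclideanSpace ℝ (Fin n),
      f (dist x ξ) ≤ 2 * Real.exp (a * dist ξ η) * f (dist x η) := by
  intro x
  set t : ℝ := dist x ξ with htdef
  set t' : ℝ := dist x η with ht'def
  set D : ℝ := dist ξ η with hDdef
  have ht : 0 ≤ t := dist_nonneg
  have ht' : 0 ≤ t' := dist_nonneg
  have hD : 0 ≤ D := dist_nonneg
  have htri : t' ≤ t + D := dist_triangle x ξ η
  have hae : ∀ᵐ s ∂τ, 0 ≤ s := by
    refine MeasureTheory.ae_iff.mpr ?_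
    have h0 : {s : ℝ | ¬ 0 ≤ s} = Set.Iio 0 := by ext s; simp
    rw [h0]; exact hτsupp
  have hint : ∀ u : ℝ, 0 ≤ u → Integrable (fun s => Real.exp (-(s * u))) τ := by
    intro u hu
    refine Integrable.mono' (integrable_const 1)
      (Continuous.aestronglyMeasurable (by continuity)) ?_
    filter_upwards [hae] with s hs
    rw [Real.norm_eq_abs, abs_of_pos (Real.exp_pos _)]
    exact Real.exp_le_one_iff.mpr (by nlinarith)
  have hInt := hint t ht
  have hInt' := hint t' ht'
  have hA : MeasurableSet (Set.Icc (0:ℝ) a) := measurableSet_Icc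
  rw [hf t ht, hf t' ht']
  have hsplit := MeasureTheory.integral_add_compl hA hInt
  rw [← hsplit]
  set J : ℝ := ∫ s, Real.exp (-(s * t')) ∂τ with hJdef
  set JA : ℝ := ∫ s in Set.Icc (0:ℝ) a, Real.exp (-(s * t')) ∂τ with hJAdef
  have hJA_le_J : JA ≤ J := by
    apply MeasureTheory.setIntegral_le_integral hInt'
    filter_upwards with s using (Real.exp_pos _).le
  have hJA_lb : Real.exp (-(a * t')) * (τ (Set.Icc 0 a)).toReal ≤ JA := by
    have := MeasureTheory.setIntegral_mono_on
      (integrable_const (Real.exp (-(a * t')))).integrableOn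
      hInt'.integrableOn hA
      (fun s hs => Real.exp_le_exp.mpr (by simp only [neg_le_neg_iff]; nlinarith [hs.1, hs.2]))
    simpa [MeasureTheory.setIntegral_const, mul_comm, measureReal_def] using this
  have hJA_half : 1 / 2 * Real.exp (-(a * t')) ≤ JA := by
    calc 1 / 2 * Real.exp (-(a * t'))
        ≤ (τ (Set.Icc 0 a)).toReal * Real.exp (-(a * t')) :=
          mul_le_mul_of_nonneg_right haτ.le (Real.exp_pos _).le
      _ = Real.exp (-(a * t')) * (τ (Set.Icc 0 a)).toReal := mul_comm _ _
      _ ≤ JA := hJA_lb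
  have hI1 : (∫ s in Set.Icc (0:ℝ) a, Real.exp (-(s * t)) ∂τ)
      ≤ Real.exp (a * D) * J := by
    have step1 : (∫ s in Set.Icc (0:ℝ) a, Real.exp (-(s * t)) ∂τ)
        ≤ ∫ s in Set.Icc (0:ℝ) a, Real.exp (a * D) * Real.exp (-(s * t')) ∂τ := by
      apply MeasureTheory.setIntegral_mono_on hInt.integrableOn
        ((hInt'.const_mul _).integrableOn) hA
      intro s hs
      rw [← Real.exp_add]
      apply Real.exp_le_exp.mpr
      nlinarith [hs.1, hs.2]
    calc (∫ s in Set.Icc (0:ℝ) a, Real.exp (-(s * t)) ∂τ)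
        ≤ ∫ s in Set.Icc (0:ℝ) a, Real.exp (a * D) * Real.exp (-(s * t')) ∂τ := step1
      _ = Real.exp (a * D) * JA := by rw [MeasureTheory.integral_const_mul]
      _ ≤ Real.exp (a * D) * J :=
          mul_le_mul_of_nonneg_left hJA_le_J (Real.exp_pos _).le
  have hcompl : (τ (Set.Icc (0:ℝ) a)ᶜ).toReal ≤ 1 / 2 := by
    have h1 : τ (Set.Icc (0:ℝ) a)ᶜ = 1 - τ (Set.Icc (0:ℝ) a) := by
      rw [measure_compl hA (measure_ne_top τ _), measure_univ]
    have h2 : τ (Set.Icc (0:ℝ) a) ≤ 1 := prob_le_one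
    rw [h1, ENNReal.toReal_sub_of_le h2 (by simp)]
    simp only [ENNReal.toReal_one]
    linarith
  have hI2 : (∫ s in (Set.Icc (0:ℝ) a)ᶜ, Real.exp (-(s * t)) ∂τ)
      ≤ Real.exp (a * D) * J := by
    have step1 : (∫ s in (Set.Icc (0:ℝ) a)ᶜ, Real.exp (-(s * t)) ∂τ)
        ≤ ∫ _ in (Set.Icc (0:ℝ) a)ᶜ, Real.exp (-(a * t)) ∂τ := by
      apply MeasureTheory.setIntegral_mono_on_ae hInt.integrableOn
        (integrable_const _).integrableOn hA.compl
      filter_upwards [hae] with s hs hsc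
      have hsa : a < s := by
        simp only [Set.mem_compl_iff, Set.mem_Icc, not_and, not_le] at hsc
        exact hsc hs
      exact Real.exp_le_exp.mpr (by nlinarith)
    have step2 : (∫ _ in (Set.Icc (0:ℝ) a)ᶜ, Real.exp (-(a * t)) ∂τ)
        ≤ 1 / 2 * Real.exp (-(a * t)) := by
      rw [MeasureTheory.setIntegral_const, smul_eq_mul]
      exact mul_le_mul_of_nonneg_right hcompl (Real.exp_pos _).le
    have step3 : Real.exp (-(a * t)) ≤ Real.exp (a * D) * Real.exp (-(a * t')) := by
      rw [← Real.exp_add]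
      apply Real.exp_le_exp.mpr
      nlinarith
    calc (∫ s in (Set.Icc (0:ℝ) a)ᶜ, Real.exp (-(s * t)) ∂τ)
        ≤ 1 / 2 * Real.exp (-(a * t)) := step1.trans step2
      _ ≤ 1 / 2 * (Real.exp (a * D) * Real.exp (-(a * t'))) := by
          apply mul_le_mul_of_nonneg_left step3 (by norm_num)
      _ = Real.exp (a * D) * (1 / 2 * Real.exp (-(a * t'))) := by ring
      _ ≤ Real.exp (a * D) * JA :=
          mul_le_mul_of_nonneg_left hJA_half (Real.exp_pos _).le
      _ ≤ Real.exp (a * D) * J :=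
          mul_le_mul_of_nonneg_left hJA_le_J (Real.exp_pos _).le
  calc (∫ s in Set.Icc (0:ℝ) a, Real.exp (-(s * t)) ∂τ)
        + ∫ s in (Set.Icc (0:ℝ) a)ᶜ, Real.exp (-(s * t)) ∂τ
      ≤ Real.exp (a * D) * J + Real.exp (a * D) * J := add_le_add hI1 hI2
    _ = 2 * Real.exp (a * D) * J := by ring
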